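/- The 8×8 symmetric integer matrix M with diagonal (2,2,2,2,2,2,4,2), with M(j,j+1) = M(j+1,j) = 1 for j = 1,...,5, M(6,7) = M(7,6) = 2, M(7,8) = M(8,7) = 1, and all other entries zero, is positive definite, even, and has determinant 1; hence it is congruent over ℤ to the E8 form. -/

import Mathlib

open Matrix


/-- The intersection matrix of the linear diagram `L(2^[6] ·⁽²⁾ 4 · 2)`:
diagonal `(2,2,2,2,2,2,4,2)`, consecutive entries `1` along the first six,
geometric linking `2` between the sixth and seventh, `1` between the last two. -/
def Mlin : Matrix (Fin 8) (Fin 8) ℤ :=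
  !![2, 1, 0, 0, 0, 0, 0, 0;
     1, 2, 1, 0, 0, 0, 0, 0;
     0, 1, 2, 1, 0, 0, 0, 0;
     0, 0, 1, 2, 1, 0, 0, 0;
     0, 0, 0, 1, 2, 1, 0, 0;
     0, 0, 0, 0, 1, 2, 2, 0;
     0, 0, 0, 0, 0, 2, 4, 1;
     0, 0, 0, 0, 0, 0, 1, 2]

/-- The `E8` intersection matrix: the positive definite even unimodular rank 8
form, given by the `E8` plumbing graph (chain `v₁ ⋯ v₇` plus edge `v₅v₈`),
all weights `2`. -/
def E8 : Matrix (Fin 8) (Fin 8) ℤ :=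
  !![2, 1, 0, 0, 0, 0, 0, 0;
     1, 2, 1, 0, 0, 0, 0, 0;
     0, 1, 2, 1, 0, 0, 0, 0;
     0, 0, 1, 2, 1, 0, 0, 0;
     0, 0, 0, 1, 2, 1, 0, 1;
     0, 0, 0, 0, 1, 2, 1, 0;
     0, 0, 0, 0, 0, 1, 2, 0;
     0, 0, 0, 0, 1, 0, 0, 2]

/-- `Lsq ᵀ * Lsq = 4 • Mlin`, giving a sum-of-squares expression. -/
def Lsq : Matrix (Fin 8) (Fin 8) ℤ :=
  !![-2, -2, -2, -1, 0, 0, 0, 0;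
     -2, 0, 2, 1, 0, 0, 0, 0;
     0, -2, 0, 1, 0, 0, 0, 0;
     0, 0, 0, -2, -2, -1, -1, 0;
     0, 0, 0, -1, 0, 2, 2, 0;
     0, 0, 0, 0, -2, -1, 1, 0;
     0, 0, 0, 0, 0, -1, -3, -2;
     0, 0, 0, 0, 0, -1, -1, 2]

/-- The integer inverse of `Mlin`. -/
def Binv : Matrix (Fin 8) (Fin 8) ℤ :=
  !![2, -3, 4, -5, 6, -7, 4, -2;
     -3, 6, -8, 10, -12, 14, -8, 4;
     4, -8, 12, -15, 18, -21, 12, -6;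
     -5, 10, -15, 20, -24, 28, -16, 8;
     6, -12, 18, -24, 30, -35, 20, -10;
     -7, 14, -21, 28, -35, 42, -24, 12;
     4, -8, 12, -16, 20, -24, 14, -7;
     -2, 4, -6, 8, -10, 12, -7, 4]

/-- A change of basis realizing the congruence with `E8`. -/
def Acb : Matrix (Fin 8) (Fin 8) ℤ :=
  !![-1, -1, -1, -1, 0, 1, 1, 0;
     0, 1, 2, 2, 0, -2, -2, 0;
     0, -2, -3, -2, 0, 2, 2, 0;
     0, 2, 3, 3, 1, -2, -2, 0;
     0, -3, -3, -3, -1, 3, 3, 0;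
     0, 2, 2, 2, 0, -2, -1, 0;
     0, -1, -1, -1, 0, 1, 0, -1;
     0, 1, 1, 1, 0, -2, -2, 0]

def Acbinv : Matrix (Fin 8) (Fin 8) ℤ :=
  !![-1, -1, 0, 1, 1, 0, 0, 1;
     0, 1, 0, -2, -2, 0, 0, -2;
     0, -2, -1, 2, 2, 0, 0, 2;
     0, 3, 1, -2, -2, 0, 0, -3;
     0, -3, 0, 3, 2, 0, 0, 3;
     0, 3, 0, -3, -3, -1, 0, -4;
     0, -2, 0, 2, 2, 1, 0, 2;
     0, 1, 0, -1, -1, -1, -1, -1]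

/-- Upper-triangular half: `Nup + Nupᵀ = Mlin`. -/
def Nup : Matrix (Fin 8) (Fin 8) ℤ :=
  !![1, 1, 0, 0, 0, 0, 0, 0;
     0, 1, 1, 0, 0, 0, 0, 0;
     0, 0, 1, 1, 0, 0, 0, 0;
     0, 0, 0, 1, 1, 0, 0, 0;
     0, 0, 0, 0, 1, 1, 0, 0;
     0, 0, 0, 0, 0, 1, 2, 0;
     0, 0, 0, 0, 0, 0, 2, 1;
     0, 0, 0, 0, 0, 0, 0, 1]

lemma hLsq : Lsqᵀ * Lsq = (4 : ℤ) • Mlin := by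
  ext i j
  fin_cases i <;> fin_cases j <;> decide
lemma hMB : Mlin * Binv = 1 := by
  ext i j
  fin_cases i <;> fin_cases j <;> decide
lemma hBM : Binv * Mlin = 1 := by
  ext i j
  fin_cases i <;> fin_cases j <;> decide
lemma hAcb : Acbᵀ * E8 * Acb = Mlin := by
  ext i j
  fin_cases i <;> fin_cases j <;> decide
lemma hAA : Acb * Acbinv = 1 := by
  ext i j
  fin_cases i <;> fin_cases j <;> decide
lemma hNup : Nup + Nupᵀ = Mlin := by
  ext i j
  fin_cases i <;> fin_cases j <;> decide

section Generic

variable {n : Type*} [Fintype n] [DecidableEq n]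

lemma gen_quad (L M : Matrix n n ℤ) (hL : Lᵀ * L = (4 : ℤ) • M) (x : n → ℤ) :
    (4 : ℤ) * (x ⬝ᵥ M.mulVec x) = (L.mulVec x) ⬝ᵥ (L.mulVec x) := by
  have h : x ⬝ᵥ ((Lᵀ * L).mulVec x) = (L.mulVec x) ⬝ᵥ (L.mulVec x) := by
    rw [← Matrix.mulVec_mulVec, Matrix.dotProduct_mulVec, Matrix.vecMul_transpose]
  rw [hL] at h
  rw [← h, Matrix.smul_mulVec, dotProduct_smul, smul_eq_mul]

lemma gen_inj (M B : Matrix n n ℤ) (hBM : B * M = 1) (x : n → ℤ) (h : M.mulVec x = 0) :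
    x = 0 := by
  have h2 : (B * M).mulVec x = B.mulVec (M.mulVec x) := by
    rw [Matrix.mulVec_mulVec]
  rw [hBM, h, Matrix.mulVec_zero, Matrix.one_mulVec] at h2
  exact h2

lemma gen_pos (L M B : Matrix n n ℤ) (hL : Lᵀ * L = (4 : ℤ) • M) (hBM : B * M = 1)
    (x : n → ℤ) (hx : x ≠ 0) : 0 < x ⬝ᵥ M.mulVec x := by
  have hq := gen_quad L M hL x
  have hy : L.mulVec x ≠ 0 := by
    intro h0
    apply hx
    apply gen_inj M B hBM
    have h4 : ((4 : ℤ) • M).mulVec x = 0 := by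
      rw [← hL, ← Matrix.mulVec_mulVec, h0, Matrix.mulVec_zero]
    rw [Matrix.smul_mulVec] at h4
    funext i
    have h5 := congrFun h4 i
    simp only [Pi.smul_apply, smul_eq_mul, Pi.zero_apply] at h5 ⊢
    omega
  have hpos : 0 < (L.mulVec x) ⬝ᵥ (L.mulVec x) := by
    obtain ⟨i, hi⟩ := Function.ne_iff.mp hy
    have h6 : ∀ j ∈ Finset.univ, 0 ≤ L.mulVec x j * L.mulVec x j :=
      fun j _ => mul_self_nonneg _
    exact Finset.sum_pos' h6 ⟨i, Finset.mem_univ i, mul_self_pos.mpr hi⟩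
  linarith

lemma gen_even (M N : Matrix n n ℤ) (hN : N + Nᵀ = M) (x : n → ℤ) :
    Even (x ⬝ᵥ M.mulVec x) := by
  refine ⟨x ⬝ᵥ N.mulVec x, ?_⟩
  have ht : x ⬝ᵥ Nᵀ.mulVec x = x ⬝ᵥ N.mulVec x := by
    rw [Matrix.dotProduct_mulVec, Matrix.vecMul_transpose, dotProduct_comm]
  rw [← hN, Matrix.add_mulVec, dotProduct_add, ht]

lemma gen_det (M B L : Matrix n n ℤ) (hMB : M * B = 1) (hL : Lᵀ * L = (4 : ℤ) • M) :
    M.det = 1 := by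
  have h1 : M.det * B.det = 1 := by
    have h0 := congrArg Matrix.det hMB
    rw [Matrix.det_mul, Matrix.det_one] at h0
    exact h0
  have h2 := congrArg Matrix.det hL
  rw [Matrix.det_mul, Matrix.det_transpose, Matrix.det_smul] at h2
  have hc : (0 : ℤ) < 4 ^ Fintype.card n := pow_pos (by norm_num) _
  have h3 := Int.isUnit_iff.mp (IsUnit.of_mul_eq_one _ h1)
  rcases h3 with h | h
  · exact h
  · exfalso; nlinarith [mul_self_nonneg L.det]

end Generic

theorem stmt16 :
    (∀ x : Fin 8 → ℤ, x ≠ 0 → 0 < x ⬝ᵥ Mlin.mulVec x) ∧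
    (∀ x : Fin 8 → ℤ, Even (x ⬝ᵥ Mlin.mulVec x)) ∧
    Mlin.det = 1 ∧
    (∃ A : Matrix (Fin 8) (Fin 8) ℤ, IsUnit A.det ∧ Mlin = Aᵀ * E8 * A) :=
  ⟨fun x hx => gen_pos Lsq Mlin Binv hLsq hBM x hx,
   fun x => gen_even Mlin Nup hNup x,
   gen_det Mlin Binv Lsq hMB hLsq,
   ⟨Acb, Matrix.isUnit_det_of_right_inverse hAA, hAcb.symm⟩⟩
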